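/- arXiv:1406.0690 — 3 statements merged into one kernel-verified Lean document; each statement's English description precedes it below -/
import Mathlib

section
/- Let Σ be a nonempty finite alphabet with k letters, let U_Σ = {x ∈ Σ* | every letter of Σ occurs in x} and U'_Σ = Σ·U_Σ (the words consisting of an arbitrary letter of Σ followed by a word of U_Σ). Then nN(U'_Σ) = nD(U'_Σ) = 2^k + 1. -/
/-- An accepting run of an NFA on a word `w`: a sequence of `|w|+1` states starting
in an initial state, ending in an accepting state, and following the transitions. -/
def NFA.IsAcceptingRun {α σ : Type*} (M : NFA α σ) (w : List α)
    (r : Fin (w.length + 1) → σ) : Prop :=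
  r 0 ∈ M.start ∧ r (Fin.last w.length) ∈ M.accept ∧
    ∀ i : Fin w.length, r i.succ ∈ M.step (r i.castSucc) (w.get i)

/-- An NFA is unambiguous (a UFA) if every word has at most one accepting run. -/
def NFA.Unambiguous {α σ : Type*} (M : NFA α σ) : Prop :=
  ∀ (w : List α) (r₁ r₂ : Fin (w.length + 1) → σ),
    M.IsAcceptingRun w r₁ → M.IsAcceptingRun w r₂ → r₁ = r₂

/-- A deterministic NFA (a DFA with a possibly partial transition function):
exactly one initial state and at most one successor per state and letter. -/
def NFA.Deterministic {α σ : Type*} (M : NFA α σ) : Prop :=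
  (∃ q₀, M.start = {q₀}) ∧ ∀ q a, (M.step q a).Subsingleton

/-- Minimal number of states of an NFA recognizing `L` (`nN(L)`). -/
noncomputable def nN {α : Type} (L : Language α) : ℕ :=
  sInf {n | ∃ (σ : Type) (inst : Fintype σ) (M : NFA α σ),
    @Fintype.card σ inst = n ∧ M.accepts = L}

/-- Minimal number of states of a DFA (partial transition function allowed)
recognizing `L` (`nD(L)`). -/
noncomputable def nD {α : Type} (L : Language α) : ℕ :=
  sInf {n | ∃ (σ : Type) (inst : Fintype σ) (M : NFA α σ),
    M.Deterministic ∧ @Fintype.card σ inst = n ∧ M.accepts = L}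

/-- Minimal number of states of an unambiguous NFA recognizing `L` (`nU(L)`). -/
noncomputable def nU {α : Type} (L : Language α) : ℕ :=
  sInf {n | ∃ (σ : Type) (inst : Fintype σ) (M : NFA α σ),
    M.Unambiguous ∧ @Fintype.card σ inst = n ∧ M.accepts = L}

/-- Upward closure: all superwords (w.r.t. the scattered-subword ordering
`List.Sublist`) of words of `L`. -/
def upClosure {α : Type} (L : Language α) : Language α := {x | ∃ y ∈ L, y.Sublist x}

/-- Downward closure: all subwords of words of `L`. -/
def downClosure {α : Type} (L : Language α) : Language α := {x | ∃ y ∈ L, x.Sublist y}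

/-- Upward interior: words all of whose superwords are in `L`. -/
def upInterior {α : Type} (L : Language α) : Language α := {x | ∀ y, x.Sublist y → y ∈ L}

/-- Downward interior: words all of whose subwords are in `L`. -/
def downInterior {α : Type} (L : Language α) : Language α := {x | ∀ y, y.Sublist x → y ∈ L}

theorem NFA.evalFrom_append' {α σ : Type*} (M : NFA α σ) (P : Set σ) (x y : List α) :
    M.evalFrom P (x ++ y) = M.evalFrom (M.evalFrom P x) y :=
  List.foldl_append

theorem NFA.mem_evalFrom_iff' {α σ : Type*} (M : NFA α σ) (P : Set σ) (w : List α) (q : σ) :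
    q ∈ M.evalFrom P w ↔ ∃ p ∈ P, q ∈ M.evalFrom {p} w := by
  induction w generalizing P with
  | nil => simp
  | cons a w ih =>
    have hstep : ∀ (Q : Set σ), M.evalFrom Q (a :: w) = M.evalFrom (M.stepSet Q a) w :=
      fun _ => rfl
    rw [hstep, ih]
    constructor
    · rintro ⟨r, hr, hq⟩
      rw [M.mem_stepSet] at hr
      obtain ⟨p, hp, hr⟩ := hr
      refine ⟨p, hp, ?_⟩
      rw [hstep, ih]
      exact ⟨r, by simp [M.mem_stepSet, hr], hq⟩
    · rintro ⟨p, hp, hq⟩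
      rw [hstep, ih] at hq
      obtain ⟨r, hr, hq⟩ := hq
      refine ⟨r, ?_, hq⟩
      rw [M.mem_stepSet]
      exact ⟨p, hp, by simpa [M.mem_stepSet] using hr⟩

def detM (α : Type) [Fintype α] [DecidableEq α] : NFA α (Option (Finset α)) where
  step q a := match q with
    | none => {some ∅}
    | some S => {some (insert a S)}
  start := {none}
  accept := {some Finset.univ}

theorem detM_evalFrom (α : Type) [Fintype α] [DecidableEq α] (S : Finset α) (w : List α) :
    (detM α).evalFrom {some S} w = {some (S ∪ w.toFinset)} := by
  induction w generalizing S with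
  | nil => simp
  | cons a w ih =>
    have hstep : (detM α).evalFrom {some S} (a :: w)
        = (detM α).evalFrom ((detM α).stepSet {some S} a) w := rfl
    have h1 : (detM α).stepSet {some S} a = {some (insert a S)} := by
      ext r; simp [NFA.mem_stepSet, detM]
    rw [hstep, h1, ih]
    congr 2
    ext b
    simp only [Finset.mem_union, Finset.mem_insert, List.toFinset_cons, List.mem_toFinset]
    tauto

theorem detM_accepts (α : Type) [Fintype α] [DecidableEq α] :
    (detM α).accepts = {x | ∃ (a : α) (w : List α), x = a :: w ∧ ∀ b : α, b ∈ w} := by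
  ext x
  rw [NFA.mem_accepts]
  cases x with
  | nil =>
    simp only [NFA.evalFrom_nil]
    constructor
    · rintro ⟨f, hf, hf2⟩
      simp only [detM, Set.mem_singleton_iff] at hf2
      subst hf2
      simp [detM] at hf
    · rintro ⟨a, w, h, -⟩; simp at h
  | cons a w =>
    have hstep : (detM α).evalFrom (detM α).start (a :: w)
        = (detM α).evalFrom ((detM α).stepSet (detM α).start a) w := rfl
    have h1 : (detM α).stepSet (detM α).start a = {some (∅ : Finset α)} := by
      ext r; simp [NFA.mem_stepSet, detM]
    rw [hstep, h1, detM_evalFrom]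
    constructor
    · rintro ⟨f, hf, hf2⟩
      simp only [detM, Set.mem_singleton_iff] at hf hf2
      subst hf2
      refine ⟨a, w, rfl, fun b => ?_⟩
      have hb : (b : α) ∈ (∅ : Finset α) ∪ w.toFinset := by
        rw [Option.some.inj hf]; exact Finset.mem_univ b
      simpa using hb
    · rintro ⟨a', w', heq, hw⟩
      obtain ⟨rfl, rfl⟩ := List.cons_eq_cons.mp heq
      refine ⟨some ((∅ : Finset α) ∪ w.toFinset), ?_, rfl⟩
      have huniv : (∅ : Finset α) ∪ w.toFinset = Finset.univ := by
        ext b; simpa using hw b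
      simp [detM, huniv]

theorem fooling_lower_bound {α : Type} [Fintype α] [Nonempty α] [DecidableEq α]
    {σ : Type} [inst : Fintype σ] (M : NFA α σ)
    (hM : M.accepts = {x | ∃ (a : α) (w : List α), x = a :: w ∧ ∀ b : α, b ∈ w}) :
    2 ^ Fintype.card α + 1 ≤ Fintype.card σ := by
  classical
  set U' : Language α := {x | ∃ (a : α) (w : List α), x = a :: w ∧ ∀ b : α, b ∈ w} with hU'
  obtain ⟨a₀⟩ := ‹Nonempty α›
  have hmem : ∀ (l : List α), (a₀ :: l) ∈ U' ↔ ∀ b : α, b ∈ l := by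
    intro l
    constructor
    · rintro ⟨a, w, heq, hw⟩
      obtain ⟨rfl, rfl⟩ := List.cons_eq_cons.mp heq
      exact hw
    · intro h; exact ⟨a₀, l, rfl, h⟩
  have hex : ∀ S : Finset α, ∃ q : σ, q ∈ M.eval (a₀ :: S.toList) ∧
      ∃ f ∈ M.accept, f ∈ M.evalFrom {q} Sᶜ.toList := by
    intro S
    have hx : (a₀ :: S.toList) ++ Sᶜ.toList ∈ M.accepts := by
      rw [hM]
      show (a₀ :: (S.toList ++ Sᶜ.toList)) ∈ U'
      rw [hmem]
      intro b
      rw [List.mem_append, Finset.mem_toList, Finset.mem_toList, Finset.mem_compl]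
      exact em _
    rw [NFA.mem_accepts] at hx
    obtain ⟨f, hf, hfx⟩ := hx
    rw [NFA.evalFrom_append', NFA.mem_evalFrom_iff'] at hfx
    obtain ⟨q, hq, hfq⟩ := hfx
    exact ⟨q, hq, f, hf, hfq⟩
  have hex0 : ∃ q : σ, q ∈ M.start ∧
      ∃ f ∈ M.accept, f ∈ M.evalFrom {q} (a₀ :: (Finset.univ : Finset α).toList) := by
    have hx : (a₀ :: (Finset.univ : Finset α).toList) ∈ M.accepts := by
      rw [hM]; exact (hmem _).mpr (by simp)
    rw [NFA.mem_accepts] at hx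
    obtain ⟨f, hf, hfx⟩ := hx
    rw [NFA.mem_evalFrom_iff'] at hfx
    obtain ⟨q, hq, hfq⟩ := hfx
    exact ⟨q, hq, f, hf, hfq⟩
  choose g hg1 hg2 using hex
  obtain ⟨q0, hq0, hq0acc⟩ := hex0
  have key : ∀ (x y : List α) (q : σ), q ∈ M.eval x →
      (∃ f ∈ M.accept, f ∈ M.evalFrom {q} y) → (x ++ y) ∈ M.accepts := by
    rintro x y q hq ⟨f, hf, hfy⟩
    rw [NFA.mem_accepts]
    refine ⟨f, hf, ?_⟩
    rw [NFA.evalFrom_append', NFA.mem_evalFrom_iff']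
    exact ⟨q, hq, hfy⟩
  have hnot : ∀ S : Finset α, (Sᶜ.toList : List α) ∉ U' := by
    intro S hSc
    obtain ⟨a, w, heq, hw⟩ := hSc
    have hnd : (a :: w).Nodup := heq ▸ Finset.nodup_toList _
    exact (List.nodup_cons.mp hnd).1 (hw a)
  have hsub : ∀ S T : Finset α, g S = g T → S ⊆ T := by
    intro S T hgST
    have hacc : (a₀ :: T.toList) ++ Sᶜ.toList ∈ M.accepts :=
      key _ _ (g T) (hg1 T) (hgST ▸ hg2 S)
    rw [hM] at hacc
    have hall : ∀ b : α, b ∈ T.toList ++ Sᶜ.toList := (hmem _).mp hacc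
    intro b hb
    rcases List.mem_append.mp (hall b) with h | h
    · exact Finset.mem_toList.mp h
    · exact absurd hb (Finset.mem_compl.mp (Finset.mem_toList.mp h))
  let F : Option (Finset α) → σ := fun o => o.elim q0 g
  have hstartcase : ∀ S : Finset α, q0 ≠ g S := by
    intro S hq
    have hacc : ([] : List α) ++ Sᶜ.toList ∈ M.accepts :=
      key [] _ q0 (by simpa using hq0) (hq ▸ hg2 S)
    rw [List.nil_append, hM] at hacc
    exact hnot S hacc
  have hinj : Function.Injective F := by
    intro o1 o2 heq
    match o1, o2 with
    | none, none => rfl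
    | some S, some T =>
      exact congrArg some (le_antisymm (hsub S T heq) (hsub T S heq.symm))
    | none, some S => exact absurd heq (hstartcase S)
    | some S, none => exact absurd heq.symm (hstartcase S)
  calc 2 ^ Fintype.card α + 1 = Fintype.card (Option (Finset α)) := by
        simp [Fintype.card_option, Fintype.card_finset]
    _ ≤ Fintype.card σ := Fintype.card_le_of_injective F hinj

/-- For a nonempty `k`-letter alphabet, the language `U'_Σ = Σ·U_Σ` (an arbitrary
letter followed by a word in which every letter of `Σ` occurs) satisfies
`nN(U'_Σ) = nD(U'_Σ) = 2^k + 1`. -/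
theorem nN_nD_of_U' {α : Type} [Fintype α] [Nonempty α] (k : ℕ)
    (hk : Fintype.card α = k) (U' : Language α)
    (hU' : U' = {x | ∃ (a : α) (w : List α), x = a :: w ∧ ∀ b : α, b ∈ w}) :
    nN U' = 2 ^ k + 1 ∧ nD U' = 2 ^ k + 1 := by
  classical
  subst hk
  subst hU'
  set L : Language α := {x | ∃ (a : α) (w : List α), x = a :: w ∧ ∀ b : α, b ∈ w} with hL
  have hcard : @Fintype.card (Option (Finset α)) inferInstance = 2 ^ Fintype.card α + 1 := by
    simp [Fintype.card_option, Fintype.card_finset]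
  have hdet : (detM α).Deterministic := by
    refine ⟨⟨none, rfl⟩, fun q a => ?_⟩
    cases q <;> exact Set.subsingleton_singleton
  have hmemD : (2 ^ Fintype.card α + 1) ∈ {n | ∃ (σ : Type) (inst : Fintype σ) (M : NFA α σ),
      M.Deterministic ∧ @Fintype.card σ inst = n ∧ M.accepts = L} :=
    ⟨Option (Finset α), inferInstance, detM α, hdet, hcard, detM_accepts α⟩
  have hmemN : (2 ^ Fintype.card α + 1) ∈ {n | ∃ (σ : Type) (inst : Fintype σ) (M : NFA α σ),
      @Fintype.card σ inst = n ∧ M.accepts = L} :=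
    ⟨Option (Finset α), inferInstance, detM α, hcard, detM_accepts α⟩
  have hlbN : ∀ n ∈ {n | ∃ (σ : Type) (inst : Fintype σ) (M : NFA α σ),
      @Fintype.card σ inst = n ∧ M.accepts = L}, 2 ^ Fintype.card α + 1 ≤ n := by
    rintro n ⟨σ, inst, M, rfl, hMacc⟩
    exact fooling_lower_bound M hMacc
  have hlbD : ∀ n ∈ {n | ∃ (σ : Type) (inst : Fintype σ) (M : NFA α σ),
      M.Deterministic ∧ @Fintype.card σ inst = n ∧ M.accepts = L},
      2 ^ Fintype.card α + 1 ≤ n := by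
    rintro n ⟨σ, inst, M, -, rfl, hMacc⟩
    exact fooling_lower_bound M hMacc
  constructor
  · exact le_antisymm (Nat.sInf_le hmemN) (le_csInf ⟨_, hmemN⟩ hlbN)
  · exact le_antisymm (Nat.sInf_le hmemD) (le_csInf ⟨_, hmemD⟩ hlbD)
end

section
/- Tightness of the upward-closure bound: for every k ≥ 1, over the alphabet Σ_k = {a_1,…,a_k}, the language E_k = {a a | a ∈ Σ_k} = {a_1 a_1, …, a_k a_k} satisfies nN(E_k) = nD(E_k) = k + 2 and nD(↑E_k) = 2^k + 1. (Note ↑E_k is the set of all words over Σ_k in which some letter occurs at least twice.) -/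
namespace MyAux


variable {α σ : Type*} (M : NFA α σ)

lemma stepSet_mono {S T : Set σ} (h : S ⊆ T) (a : α) : M.stepSet S a ⊆ M.stepSet T a := by
  intro q hq
  rw [NFA.mem_stepSet] at *
  obtain ⟨t, ht, h2⟩ := hq
  exact ⟨t, h ht, h2⟩

lemma evalFrom_cons (S : Set σ) (a : α) (w : List α) :
    M.evalFrom S (a :: w) = M.evalFrom (M.stepSet S a) w := rfl

lemma evalFrom_mono {S T : Set σ} (h : S ⊆ T) (w : List α) :
    M.evalFrom S w ⊆ M.evalFrom T w := by
  induction w generalizing S T with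
  | nil => exact h
  | cons a w ih => exact ih (stepSet_mono M h a)

lemma evalFrom_empty (w : List α) : M.evalFrom ∅ w = ∅ := by
  induction w with
  | nil => rfl
  | cons a w ih => rw [evalFrom_cons, NFA.stepSet_empty, ih]

lemma evalFrom_append (S : Set σ) (x y : List α) :
    M.evalFrom S (x ++ y) = M.evalFrom (M.evalFrom S x) y := by
  simp [NFA.evalFrom, List.foldl_append]

lemma mem_evalFrom_iff {q : σ} {S : Set σ} {w : List α} :
    q ∈ M.evalFrom S w ↔ ∃ p ∈ S, q ∈ M.evalFrom {p} w := by
  induction w generalizing S with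
  | nil => simp
  | cons a w ih =>
    constructor
    · intro h
      rw [evalFrom_cons, ih] at h
      obtain ⟨p, hp, hq⟩ := h
      rw [NFA.mem_stepSet] at hp
      obtain ⟨s, hs, hp⟩ := hp
      refine ⟨s, hs, ?_⟩
      rw [evalFrom_cons, ih]
      exact ⟨p, by rw [NFA.mem_stepSet]; exact ⟨s, rfl, hp⟩, hq⟩
    · rintro ⟨s, hs, hq⟩
      exact evalFrom_mono M (Set.singleton_subset_iff.mpr hs) _ hq

lemma accepts_append {x y : List α} {q : σ} (hq : q ∈ M.evalFrom M.start x)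
    (hy : ∃ f ∈ M.accept, f ∈ M.evalFrom {q} y) : (x ++ y) ∈ M.accepts := by
  obtain ⟨f, hf, hfy⟩ := hy
  refine ⟨f, hf, ?_⟩
  rw [NFA.eval, evalFrom_append]
  exact evalFrom_mono M (Set.singleton_subset_iff.mpr hq) y hfy

lemma accepts_split {x y : List α} (h : (x ++ y) ∈ M.accepts) :
    ∃ q ∈ M.evalFrom M.start x, ∃ f ∈ M.accept, f ∈ M.evalFrom {q} y := by
  obtain ⟨f, hf, hfy⟩ := h
  rw [NFA.eval, evalFrom_append, mem_evalFrom_iff] at hfy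
  obtain ⟨q, hq, h⟩ := hfy
  exact ⟨q, hq, f, hf, h⟩

lemma fooling {ι : Type*} [Fintype ι] [Fintype σ] {L : Language α} (hL : M.accepts = L)
    (x y : ι → List α) (hxy : ∀ i, x i ++ y i ∈ L)
    (hcross : ∀ i j, i ≠ j → x i ++ y j ∉ L ∨ x j ++ y i ∉ L) :
    Fintype.card ι ≤ Fintype.card σ := by
  have hmem : ∀ i, ∃ q ∈ M.evalFrom M.start (x i), ∃ f ∈ M.accept, f ∈ M.evalFrom {q} (y i) := by
    intro i
    exact accepts_split M (by rw [hL]; exact hxy i)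
  choose q hq f hf hfy using hmem
  have hinj : Function.Injective q := by
    intro i j hij
    by_contra hne
    rcases hcross i j hne with h | h
    · exact h (by rw [← hL]; exact accepts_append M (hq i) ⟨f j, hf j, by rw [hij]; exact hfy j⟩)
    · exact h (by rw [← hL]; exact accepts_append M (hq j) ⟨f i, hf i, by rw [← hij]; exact hfy i⟩)
  exact Fintype.card_le_of_injective q hinj


lemma E_lower (k : ℕ) (hk : 1 ≤ k) {σ : Type*} [Fintype σ] (M : NFA (Fin k) σ)
    (hacc : M.accepts = {w : List (Fin k) | ∃ a : Fin k, w = [a, a]}) :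
    k + 2 ≤ Fintype.card σ := by
  set a0 : Fin k := ⟨0, hk⟩ with ha0
  set L : Language (Fin k) := {w : List (Fin k) | ∃ a : Fin k, w = [a, a]} with hL
  set x : Option (Option (Fin k)) → List (Fin k) := fun i => match i with
    | some (some a) => [a]
    | some none => []
    | none => [a0, a0] with hx
  set y : Option (Option (Fin k)) → List (Fin k) := fun i => match i with
    | some (some a) => [a]
    | some none => [a0, a0]
    | none => [] with hy
  have hxy : ∀ i, x i ++ y i ∈ L := by
    rintro (_ | _ | a)
    · exact ⟨a0, rfl⟩
    · exact ⟨a0, rfl⟩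
    · exact ⟨a, rfl⟩
  have hcross : ∀ i j, i ≠ j → x i ++ y j ∉ L ∨ x j ++ y i ∉ L := by
    intro i j hij
    left
    match i, j with
    | some (some a), some (some b) =>
      rintro ⟨c, hc⟩
      simp only [hx, hy, List.cons_append, List.nil_append, List.cons.injEq, and_true] at hc
      obtain ⟨rfl, rfl, -⟩ := hc
      exact hij rfl
    | some (some a), some none => rintro ⟨c, hc⟩; simp [hx, hy] at hc
    | some (some a), none => rintro ⟨c, hc⟩; simp [hx, hy] at hc
    | some none, some (some a) => rintro ⟨c, hc⟩; simp [hx, hy] at hc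
    | some none, none => rintro ⟨c, hc⟩; simp [hx, hy] at hc
    | none, some (some a) => rintro ⟨c, hc⟩; simp [hx, hy] at hc
    | none, some none => rintro ⟨c, hc⟩; simp [hx, hy] at hc
    | some none, some none => exact absurd rfl hij
    | none, none => exact absurd rfl hij
  have := fooling M hacc x y hxy hcross
  simp [Fintype.card_option] at this; omega



def ME (k : ℕ) : NFA (Fin k) (Option (Option (Fin k))) where
  step q b := match q with
    | some none => {some (some b)}
    | some (some a) => if b = a then {none} else ∅
    | none => ∅
  start := {some none}
  accept := {none}

lemma ME_det (k : ℕ) : (ME k).Deterministic := by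
  refine ⟨⟨some none, rfl⟩, fun q a => ?_⟩
  match q with
  | some none => exact Set.subsingleton_singleton
  | none => exact Set.subsingleton_empty
  | some (some b) =>
    by_cases h : a = b
    · simp only [ME, h, if_pos rfl]; exact Set.subsingleton_singleton
    · simp only [ME, if_neg h]; exact Set.subsingleton_empty


lemma ME_accepts (k : ℕ) : (ME k).accepts = {w | ∃ a : Fin k, w = [a, a]} := by
  ext w
  rw [NFA.mem_accepts]
  have hstep : ∀ (q : Option (Option (Fin k))) (b : Fin k),
      (ME k).stepSet {q} b = (ME k).step q b := by
    intro q b; simp [NFA.stepSet]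
  match w with
  | [] =>
    simp only [ME, Set.mem_setOf_eq]
    constructor
    · rintro ⟨S, hS, hmem⟩; simp at hS hmem; simp [hS] at hmem
    · rintro ⟨a, h⟩; simp at h
  | [a] =>
    rw [show (ME k).evalFrom (ME k).start [a] = (ME k).stepSet (ME k).start a from rfl]
    rw [show (ME k).start = {some none} from rfl, hstep]
    constructor
    · rintro ⟨S, hS, hmem⟩; simp [ME] at hS hmem; simp [hS] at hmem
    · rintro ⟨c, h⟩; simp at h
  | [a, b] =>
    rw [show (ME k).evalFrom (ME k).start [a, b]
        = (ME k).stepSet ((ME k).stepSet {some none} a) b from rfl, hstep]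
    rw [show (ME k).step (some none) a = {some (some a)} from rfl, hstep]
    show (∃ S ∈ ({none} : Set (Option (Option (Fin k)))),
        S ∈ (if b = a then ({none} : Set (Option (Option (Fin k)))) else ∅)) ↔ _
    constructor
    · rintro ⟨S, hS, hmem⟩
      by_cases h : b = a
      · exact ⟨a, by rw [h]⟩
      · rw [if_neg h] at hmem; exact absurd hmem (Set.notMem_empty S)
    · rintro ⟨c, hc⟩
      obtain ⟨rfl, rfl⟩ : a = c ∧ b = c := by simpa using hc
      exact ⟨none, rfl, by simp⟩
  | a :: b :: c :: t =>
    rw [show (ME k).evalFrom (ME k).start (a :: b :: c :: t)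
        = (ME k).evalFrom ((ME k).stepSet ((ME k).stepSet ((ME k).stepSet {some none} a) b) c) t
        from rfl, hstep]
    rw [show (ME k).step (some none) a = {some (some a)} from rfl, hstep]
    have h2 : (ME k).stepSet ((ME k).step (some (some a)) b) c = ∅ := by
      by_cases h : b = a
      · show (ME k).stepSet (if b = a then {none} else ∅) c = ∅
        rw [if_pos h, hstep]; rfl
      · show (ME k).stepSet (if b = a then {none} else ∅) c = ∅
        rw [if_neg h, NFA.stepSet_empty]
    rw [h2]
    have h3 : (ME k).evalFrom ∅ t = ∅ := by
      induction t with
      | nil => rfl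
      | cons x xs ih => rw [show (ME k).evalFrom ∅ (x::xs) = (ME k).evalFrom ((ME k).stepSet ∅ x) xs from rfl, NFA.stepSet_empty, ih]
    rw [h3]
    constructor
    · rintro ⟨S, _, hmem⟩; exact absurd hmem (Set.notMem_empty S)
    · rintro ⟨d, h⟩; simp at h



def MU (k : ℕ) : NFA (Fin k) (Option (Finset (Fin k))) where
  step q b := match q with
    | none => {none}
    | some S => if b ∈ S then {none} else {some (insert b S)}
  start := {(some ∅ : Option (Finset (Fin k)))}
  accept := {none}

lemma MU_det (k : ℕ) : (MU k).Deterministic := by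
  refine ⟨⟨some ∅, rfl⟩, fun q a => ?_⟩
  match q with
  | none => exact Set.subsingleton_singleton
  | some S =>
    by_cases h : a ∈ S
    · simp only [MU, if_pos h]; exact Set.subsingleton_singleton
    · simp only [MU, if_neg h]; exact Set.subsingleton_singleton

lemma MU_stepSet (k : ℕ) (q : Option (Finset (Fin k))) (b : Fin k) :
    (MU k).stepSet {q} b = (MU k).step q b := by
  simp [NFA.stepSet]

lemma MU_none (k : ℕ) (w : List (Fin k)) : (MU k).evalFrom {none} w = {none} := by
  induction w with
  | nil => rfl
  | cons a w ih =>
    rw [show (MU k).evalFrom {none} (a::w) = (MU k).evalFrom ((MU k).stepSet {none} a) w from rfl,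
      MU_stepSet, show (MU k).step none a = {none} from rfl, ih]

lemma MU_nodup (k : ℕ) (w : List (Fin k)) (S : Finset (Fin k)) (hnd : w.Nodup)
    (hdis : ∀ a ∈ w, a ∉ S) : (MU k).evalFrom {some S} w = {some (S ∪ w.toFinset)} := by
  induction w generalizing S with
  | nil => simp
  | cons a w ih =>
    have haS : a ∉ S := hdis a List.mem_cons_self
    rw [show (MU k).evalFrom {some S} (a::w) = (MU k).evalFrom ((MU k).stepSet {some S} a) w
      from rfl, MU_stepSet, show (MU k).step (some S) a = if a ∈ S then {none} else
      {some (insert a S)} from rfl, if_neg haS]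
    rw [List.nodup_cons] at hnd
    rw [ih (insert a S) hnd.2 ?_]
    · congr 2
      ext b
      simp only [Finset.mem_union, Finset.mem_insert, List.toFinset_cons, List.mem_toFinset]
      tauto
    · intro b hb
      simp only [Finset.mem_insert, not_or]
      exact ⟨fun hba => hnd.1 (hba ▸ hb), hdis b (List.mem_cons_of_mem a hb)⟩

lemma MU_dup (k : ℕ) (w : List (Fin k)) (S : Finset (Fin k))
    (h : ¬ w.Nodup ∨ ∃ a ∈ w, a ∈ S) : (MU k).evalFrom {some S} w = {none} := by
  induction w generalizing S with
  | nil =>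
    rcases h with h | ⟨a, ha, _⟩
    · exact absurd List.nodup_nil h
    · exact absurd ha List.not_mem_nil
  | cons a w ih =>
    rw [show (MU k).evalFrom {some S} (a::w) = (MU k).evalFrom ((MU k).stepSet {some S} a) w
      from rfl, MU_stepSet, show (MU k).step (some S) a = if a ∈ S then {none} else
      {some (insert a S)} from rfl]
    by_cases haS : a ∈ S
    · rw [if_pos haS, MU_none]
    · rw [if_neg haS]
      apply ih
      rcases h with h | ⟨b, hb, hbS⟩
      · rw [List.nodup_cons] at h
        push_neg at h
        by_cases haw : a ∈ w
        · exact Or.inr ⟨a, haw, Finset.mem_insert_self a S⟩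
        · exact Or.inl (h haw)
      · rcases List.mem_cons.mp hb with rfl | hbw
        · exact absurd hbS haS
        · exact Or.inr ⟨b, hbw, Finset.mem_insert_of_mem hbS⟩

lemma MU_accepts (k : ℕ) : (MU k).accepts = {w : List (Fin k) | ¬ w.Nodup} := by
  ext w
  rw [NFA.mem_accepts]
  have hstart : (MU k).start = {(some ∅ : Option (Finset (Fin k)))} := rfl
  constructor
  · rintro ⟨f, hf, hfe⟩
    simp only [MU, Set.mem_singleton_iff] at hf
    subst hf
    intro hnd
    rw [hstart, MU_nodup k w ∅ hnd (by simp)] at hfe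
    simp at hfe
  · intro hnd
    refine ⟨none, rfl, ?_⟩
    rw [hstart, MU_dup k w ∅ (Or.inl hnd)]
    rfl

lemma upClosure_eq (k : ℕ) :
    {x : List (Fin k) | ∃ y ∈ {w : List (Fin k) | ∃ a : Fin k, w = [a, a]}, y.Sublist x}
      = {w : List (Fin k) | ¬ w.Nodup} := by
  ext w
  simp only [Set.mem_setOf_eq]
  rw [← List.exists_duplicate_iff_not_nodup]
  constructor
  · rintro ⟨y, ⟨a, rfl⟩, hsub⟩
    exact ⟨a, List.duplicate_iff_sublist.mpr hsub⟩
  · rintro ⟨a, ha⟩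
    exact ⟨[a, a], ⟨a, rfl⟩, List.duplicate_iff_sublist.mp ha⟩



variable {α σ : Type*} (M : NFA α σ)

lemma evalFrom_cons' (S : Set σ) (a : α) (w : List α) :
    M.evalFrom S (a :: w) = M.evalFrom (M.stepSet S a) w := rfl

lemma evalFrom_empty' (w : List α) : M.evalFrom ∅ w = ∅ := by
  induction w with
  | nil => rfl
  | cons a w ih => rw [evalFrom_cons', NFA.stepSet_empty, ih]

lemma evalFrom_append' (S : Set σ) (x y : List α) :
    M.evalFrom S (x ++ y) = M.evalFrom (M.evalFrom S x) y := by
  simp [NFA.evalFrom, List.foldl_append]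

lemma det_stepSet_subsingleton (hdet : M.Deterministic) {S : Set σ} (hS : S.Subsingleton)
    (a : α) : (M.stepSet S a).Subsingleton := by
  rcases hS.eq_empty_or_singleton with rfl | ⟨q, rfl⟩
  · rw [NFA.stepSet_empty]; exact Set.subsingleton_empty
  · have : M.stepSet {q} a = M.step q a := by simp [NFA.stepSet]
    rw [this]; exact hdet.2 q a

lemma det_evalFrom_subsingleton (hdet : M.Deterministic) {S : Set σ} (hS : S.Subsingleton)
    (w : List α) : (M.evalFrom S w).Subsingleton := by
  induction w generalizing S with
  | nil => exact hS
  | cons a w ih => exact ih (det_stepSet_subsingleton M hdet hS a)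

lemma det_eval_subsingleton (hdet : M.Deterministic) (w : List α) :
    (M.evalFrom M.start w).Subsingleton := by
  obtain ⟨q0, h0⟩ := hdet.1
  exact det_evalFrom_subsingleton M hdet (h0 ▸ Set.subsingleton_singleton) w

lemma eval_append_nonempty {x y : List α}
    (h : (M.evalFrom M.start (x ++ y)).Nonempty) : (M.evalFrom M.start x).Nonempty := by
  by_contra hne
  rw [Set.not_nonempty_iff_eq_empty] at hne
  rw [evalFrom_append', hne, evalFrom_empty'] at h
  exact Set.not_nonempty_empty h

lemma MU_lower (k : ℕ) (hk : 1 ≤ k) {σ : Type*} [Fintype σ] (M : NFA (Fin k) σ)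
    (hdet : M.Deterministic) (hacc : M.accepts = {w : List (Fin k) | ¬ w.Nodup}) :
    2 ^ k + 1 ≤ Fintype.card σ := by
  set a0 : Fin k := ⟨0, hk⟩ with ha0
  -- state after reading S.toList exists
  have hne : ∀ S : Finset (Fin k), (M.evalFrom M.start S.toList).Nonempty := by
    intro S
    apply eval_append_nonempty M (y := [a0, a0])
    have hmem : S.toList ++ [a0, a0] ∈ M.accepts := by
      rw [hacc]
      intro hnd
      have := hnd.sublist (List.sublist_append_right S.toList [a0, a0])
      simp at this
    obtain ⟨f, _, hf⟩ := hmem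
    exact ⟨f, hf⟩
  choose qs hqs using hne
  have heval : ∀ S : Finset (Fin k), M.evalFrom M.start S.toList = {qs S} := by
    intro S
    exact (det_eval_subsingleton M hdet S.toList).eq_singleton_of_mem (hqs S)
  -- the accepting state
  have hmem2 : [a0, a0] ∈ M.accepts := by
    rw [hacc]
    intro hnd
    simp at hnd
  obtain ⟨qf, hqf_acc, hqf⟩ := hmem2
  -- key asymmetric fact
  have key : ∀ S T : Finset (Fin k), qs S = qs T → ∀ a, a ∈ S → a ∉ T → False := by
    intro S T hST a haS haT
    have h1 : S.toList ++ [a] ∈ M.accepts := by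
      rw [hacc]
      intro hnd
      rw [List.nodup_append] at hnd
      exact hnd.2.2 a (Finset.mem_toList.mpr haS) a (List.mem_singleton_self a) rfl
    obtain ⟨f, hf_acc, hf⟩ := h1
    rw [NFA.eval, evalFrom_append', heval, hST, ← heval, ← evalFrom_append'] at hf
    have h2 : T.toList ++ [a] ∈ M.accepts := ⟨f, hf_acc, hf⟩
    rw [hacc] at h2
    apply h2
    rw [List.nodup_append]
    refine ⟨T.nodup_toList, List.nodup_singleton a, ?_⟩
    intro b hb c hb' hbc
    rw [List.mem_singleton] at hb'
    subst hb' hbc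
    exact haT (Finset.mem_toList.mp hb)
  -- injective map
  set ψ : Option (Finset (Fin k)) → σ := fun o => match o with
    | none => qf
    | some S => qs S with hψ
  have hinj : Function.Injective ψ := by
    intro i j hij
    match i, j with
    | none, none => rfl
    | some S, some T =>
      simp only [hψ] at hij
      congr 1
      by_contra hST
      have hex : ∃ a, (a ∈ S ∧ a ∉ T) ∨ (a ∈ T ∧ a ∉ S) := by
        by_contra hno
        push_neg at hno
        apply hST
        ext a
        have := hno a
        tauto
      obtain ⟨a, h | h⟩ := hex
      · exact key S T hij a h.1 h.2
      · exact key T S hij.symm a h.1 h.2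
    | none, some S =>
      exfalso
      simp only [hψ] at hij
      have : S.toList ∈ M.accepts := ⟨qf, hqf_acc, by rw [NFA.eval, heval, hij]; rfl⟩
      rw [hacc] at this
      exact this S.nodup_toList
    | some S, none =>
      exfalso
      simp only [hψ] at hij
      have : S.toList ∈ M.accepts := ⟨qf, hqf_acc, by rw [NFA.eval, heval, ← hij]; rfl⟩
      rw [hacc] at this
      exact this S.nodup_toList
  have := Fintype.card_le_of_injective ψ hinj
  simpa [Fintype.card_option, Fintype.card_finset] using this


end MyAux

/-- Tightness of the upward-closure bound: over `Σ_k = Fin k` (`k ≥ 1`), the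
language `E_k = { aa | a ∈ Σ_k }` satisfies `nN(E_k) = nD(E_k) = k + 2` and
`nD(↑E_k) = 2^k + 1`. -/
theorem upClosure_bound_tight (k : ℕ) (hk : 1 ≤ k) (E : Language (Fin k))
    (hE : E = {w | ∃ a : Fin k, w = [a, a]}) :
    nN E = k + 2 ∧ nD E = k + 2 ∧ nD (upClosure E) = 2 ^ k + 1 := by
  subst hE
  obtain ⟨hmemN, hmemD, hmemU⟩ : (k + 2) ∈ {n | ∃ (σ : Type) (inst : Fintype σ) (M : NFA (Fin k) σ),
        @Fintype.card σ inst = n ∧ M.accepts = {w | ∃ a : Fin k, w = [a, a]}} ∧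
      (k + 2) ∈ {n | ∃ (σ : Type) (inst : Fintype σ) (M : NFA (Fin k) σ), M.Deterministic ∧
        @Fintype.card σ inst = n ∧ M.accepts = {w | ∃ a : Fin k, w = [a, a]}} ∧
      (2 ^ k + 1) ∈ {n | ∃ (σ : Type) (inst : Fintype σ) (M : NFA (Fin k) σ), M.Deterministic ∧
        @Fintype.card σ inst = n ∧
        M.accepts = upClosure {w | ∃ a : Fin k, w = [a, a]}} := by
    have hcard : Fintype.card (Option (Option (Fin k))) = k + 2 := by
      simp [Fintype.card_option]
    have hcard2 : Fintype.card (Option (Finset (Fin k))) = 2 ^ k + 1 := by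
      simp [Fintype.card_option, Fintype.card_finset]
    have hup : upClosure {w | ∃ a : Fin k, w = [a, a]} = {w : List (Fin k) | ¬ w.Nodup} :=
      MyAux.upClosure_eq k
    exact ⟨⟨_, _, MyAux.ME k, hcard, MyAux.ME_accepts k⟩,
      ⟨_, _, MyAux.ME k, MyAux.ME_det k, hcard, MyAux.ME_accepts k⟩,
      ⟨_, _, MyAux.MU k, MyAux.MU_det k, hcard2, by rw [MyAux.MU_accepts k, hup]⟩⟩
  refine ⟨le_antisymm (Nat.sInf_le hmemN) (le_csInf ⟨_, hmemN⟩ ?_),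
    le_antisymm (Nat.sInf_le hmemD) (le_csInf ⟨_, hmemD⟩ ?_),
    le_antisymm (Nat.sInf_le hmemU) (le_csInf ⟨_, hmemU⟩ ?_)⟩
  · rintro n ⟨σ, inst, M, rfl, hacc⟩
    exact MyAux.E_lower k hk M hacc
  · rintro n ⟨σ, inst, M, _, rfl, hacc⟩
    exact MyAux.E_lower k hk M hacc
  · rintro n ⟨σ, inst, M, hdet, rfl, hacc⟩
    refine MyAux.MU_lower k hk M hdet ?_
    rw [hacc]
    exact MyAux.upClosure_eq k
end

section
/- Tightness of the downward-closure bound: for every k ≥ 1, over the alphabet Σ_k = {a_1,…,a_k}, the language D_k = {x ∈ Σ_k^+ | for all positions i > 1, x[i] ≠ x[1]} (all nonempty words whose first letter does not reappear) satisfies nN(D_k) = nD(D_k) = k + 1 and nD(↓D_k) = 2^k. (Note ↓D_k is the set of all words x over Σ_k such that the suffix x[2..] obtained by removing the first letter does not use all letters of Σ_k.) -/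
open Set

section Aux
variable {α σ : Type}

lemma myEvalFrom_append (M : NFA α σ) (S : Set σ) (x y : List α) :
    M.evalFrom S (x ++ y) = M.evalFrom (M.evalFrom S x) y := by
  simp [NFA.evalFrom, List.foldl_append]

lemma myEvalFrom_empty (M : NFA α σ) (x : List α) : M.evalFrom ∅ x = ∅ := by
  induction x with
  | nil => rfl
  | cons a x ih => simpa [NFA.evalFrom] using ih

lemma myStepSet_mono (M : NFA α σ) {S T : Set σ} (h : S ⊆ T) (a : α) :
    M.stepSet S a ⊆ M.stepSet T a := by
  intro q hq
  rw [NFA.mem_stepSet] at hq ⊢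
  obtain ⟨p, hp, h2⟩ := hq
  exact ⟨p, h hp, h2⟩

lemma myStepSet_singleton (M : NFA α σ) (p : σ) (a : α) : M.stepSet {p} a = M.step p a := by
  simp [NFA.stepSet]

lemma myEvalFrom_mono (M : NFA α σ) {S T : Set σ} (h : S ⊆ T) (x : List α) :
    M.evalFrom S x ⊆ M.evalFrom T x := by
  induction x generalizing S T with
  | nil => exact h
  | cons a x ih => exact ih (myStepSet_mono M h a)

lemma myMem_evalFrom (M : NFA α σ) (S : Set σ) (x : List α) (q : σ) :
    q ∈ M.evalFrom S x ↔ ∃ p ∈ S, q ∈ M.evalFrom {p} x := by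
  induction x generalizing S with
  | nil => simp
  | cons a x ih =>
    show q ∈ M.evalFrom (M.stepSet S a) x ↔ ∃ p ∈ S, q ∈ M.evalFrom (M.stepSet {p} a) x
    rw [ih]
    constructor
    · rintro ⟨p, hp, h2⟩
      rw [NFA.mem_stepSet] at hp
      obtain ⟨t, ht, hpt⟩ := hp
      refine ⟨t, ht, ?_⟩
      rw [ih]
      refine ⟨p, ?_, h2⟩
      rw [NFA.mem_stepSet]
      exact ⟨t, rfl, hpt⟩
    · rintro ⟨p, hp, h2⟩
      rw [ih] at h2
      obtain ⟨t, ht, h3⟩ := h2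
      rw [NFA.mem_stepSet] at ht
      obtain ⟨p', hp', hpt⟩ := ht
      cases hp'
      refine ⟨t, ?_, h3⟩
      rw [NFA.mem_stepSet]
      exact ⟨p, hp, hpt⟩

/-- Fooling-set lower bound for NFAs. -/
lemma nfa_fooling [Fintype σ] (M : NFA α σ) {ι : Type} [Fintype ι] (x y : ι → List α)
    (hdiag : ∀ i, x i ++ y i ∈ M.accepts)
    (hcross : ∀ i j, i ≠ j → x i ++ y j ∉ M.accepts ∨ x j ++ y i ∉ M.accepts) :
    Fintype.card ι ≤ Fintype.card σ := by
  have key : ∀ i, ∃ q, q ∈ M.eval (x i) ∧ ∃ f ∈ M.accept, f ∈ M.evalFrom {q} (y i) := by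
    intro i
    obtain ⟨f, hf, hmem⟩ := hdiag i
    rw [NFA.eval] at hmem
    rw [myEvalFrom_append, myMem_evalFrom] at hmem
    obtain ⟨q, hq, h2⟩ := hmem
    exact ⟨q, hq, f, hf, h2⟩
  choose q hq1 hq2 using key
  have acc : ∀ {i j : ι}, q i = q j → x i ++ y j ∈ M.accepts := by
    intro i j h
    obtain ⟨f, hf, h2⟩ := hq2 j
    refine ⟨f, hf, ?_⟩
    show f ∈ M.evalFrom M.start (x i ++ y j)
    rw [myEvalFrom_append]
    apply myEvalFrom_mono M (Set.singleton_subset_iff.2 (hq1 i))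
    rw [h]
    exact h2
  have hinj : Function.Injective q := by
    intro i j hij
    by_contra hne
    rcases hcross i j hne with h | h
    · exact h (acc hij)
    · exact h (acc hij.symm)
  exact Fintype.card_le_of_injective q hinj

lemma det_evalFrom_subsingleton (M : NFA α σ) (hdet : ∀ q a, (M.step q a).Subsingleton)
    {S : Set σ} (hS : S.Subsingleton) (x : List α) : (M.evalFrom S x).Subsingleton := by
  induction x generalizing S with
  | nil => exact hS
  | cons a x ih =>
    apply ih
    intro p hp p' hp'
    rw [NFA.mem_stepSet] at hp hp'
    obtain ⟨t, ht, h1⟩ := hp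
    obtain ⟨t', ht', h2⟩ := hp'
    cases hS ht ht'
    exact hdet t a h1 h2

/-- Myhill–Nerode style lower bound for deterministic NFAs. -/
lemma det_fooling [Fintype σ] (M : NFA α σ) (hdet : M.Deterministic)
    {ι : Type} [Fintype ι] (u : ι → List α)
    (hmem : ∀ i, u i ∈ M.accepts)
    (hdist : ∀ i j, i ≠ j → ∃ v, ¬(u i ++ v ∈ M.accepts ↔ u j ++ v ∈ M.accepts)) :
    Fintype.card ι ≤ Fintype.card σ := by
  have hsub : ∀ w : List α, (M.eval w).Subsingleton := by
    intro w
    obtain ⟨q₀, h0⟩ := hdet.1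
    apply det_evalFrom_subsingleton M hdet.2
    rw [h0]
    exact Set.subsingleton_singleton
  choose q hq1 hq2 using hmem
  have heval : ∀ i, M.eval (u i) = {q i} := by
    intro i
    apply Set.eq_singleton_iff_unique_mem.2 ⟨hq2 i, fun p hp => hsub (u i) hp (hq2 i)⟩
  have hinj : Function.Injective q := by
    intro i j hij
    by_contra hne
    obtain ⟨v, hv⟩ := hdist i j hne
    apply hv
    have : ∀ w, (w ++ v ∈ M.accepts ↔ ∃ f ∈ M.accept, f ∈ M.evalFrom (M.eval w) v) := by
      intro w
      rw [NFA.mem_accepts]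
      rw [show M.evalFrom M.start (w ++ v) = M.evalFrom (M.eval w) v from myEvalFrom_append ..]
    rw [this, this, heval, heval, hij]
  exact Fintype.card_le_of_injective q hinj

end Aux
section Auto

/-- DFA for `D_k` with `k+1` states. -/
def M1 (k : ℕ) : NFA (Fin k) (Option (Fin k)) where
  step q a := match q with
    | none => {some a}
    | some b => if a = b then ∅ else {some b}
  start := {none}
  accept := {q | q ≠ none}

lemma M1_det (k : ℕ) : (M1 k).Deterministic := by
  refine ⟨⟨none, rfl⟩, fun q a => ?_⟩
  match q with
  | none => exact Set.subsingleton_singleton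
  | some b =>
    show (if a = b then (∅ : Set (Option (Fin k))) else {some b}).Subsingleton
    split
    · exact Set.subsingleton_empty
    · exact Set.subsingleton_singleton

lemma M1_stepSet_none (k : ℕ) (a : Fin k) : (M1 k).stepSet {none} a = {some a} := by
  ext q; simp [NFA.stepSet, M1]

lemma M1_evalFrom_some (k : ℕ) (t : List (Fin k)) (b : Fin k) :
    (M1 k).evalFrom {some b} t = if b ∈ t then ∅ else {some b} := by
  induction t with
  | nil => simp
  | cons a t ih =>
    show (M1 k).evalFrom ((M1 k).stepSet {some b} a) t = _
    have hstep : (M1 k).stepSet {some b} a = if a = b then ∅ else {some b} := by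
      ext q; simp [NFA.stepSet, M1]
    rw [hstep]
    by_cases hab : a = b
    · subst hab
      rw [if_pos rfl, myEvalFrom_empty, if_pos (List.mem_cons_self (a := a) (l := t))]
    · rw [if_neg hab, ih]
      by_cases hbt : b ∈ t
      · rw [if_pos hbt, if_pos (List.mem_cons_of_mem a hbt)]
      · rw [if_neg hbt, if_neg (fun h => by
          rcases List.mem_cons.1 h with h1 | h2
          exacts [hab h1.symm, hbt h2])]

lemma M1_accepts (k : ℕ) (D : Language (Fin k))
    (hD : D = {x | ∃ (a : Fin k) (w : List (Fin k)), x = a :: w ∧ a ∉ w}) :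
    (M1 k).accepts = D := by
  ext x
  rw [NFA.mem_accepts, hD]
  cases x with
  | nil =>
    simp only [NFA.evalFrom_nil]
    constructor
    · rintro ⟨f, hf, hmem⟩
      exact absurd hmem hf
    · rintro ⟨a, w, h, -⟩; cases h
  | cons a t =>
    have : (M1 k).evalFrom (M1 k).start (a :: t) = (M1 k).evalFrom {some a} t := by
      show (M1 k).evalFrom ((M1 k).stepSet {none} a) t = _
      rw [M1_stepSet_none]
    rw [this, M1_evalFrom_some]
    constructor
    · rintro ⟨f, hf, hmem⟩
      by_cases hat : a ∈ t
      · rw [if_pos hat] at hmem; exact absurd hmem (Set.notMem_empty f)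
      · exact ⟨a, t, rfl, hat⟩
    · rintro ⟨a', w', h, hnot⟩
      injection h with h1 h2
      subst h1; subst h2
      rw [if_neg hnot]
      exact ⟨_, Option.some_ne_none _, rfl⟩

/-- State type for the downward-closure DFA. -/
abbrev St (k : ℕ) := Option {S : Finset (Fin k) // S ≠ Finset.univ}

/-- DFA for `↓D_k` with `2^k` states. -/
def M2 (k : ℕ) : NFA (Fin k) (St k) where
  step q a := match q with
    | none =>
        if h : (∅ : Finset (Fin k)) ≠ Finset.univ then {some ⟨∅, h⟩} else ∅
    | some ⟨S, _⟩ =>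
        if h : insert a S ≠ Finset.univ then {some ⟨insert a S, h⟩} else ∅
  start := {none}
  accept := Set.univ

lemma M2_det (k : ℕ) : (M2 k).Deterministic := by
  refine ⟨⟨none, rfl⟩, fun q a => ?_⟩
  match q with
  | none =>
    show (if h : (∅ : Finset (Fin k)) ≠ Finset.univ then ({some ⟨∅, h⟩} : Set (St k)) else ∅).Subsingleton
    split
    · exact Set.subsingleton_singleton
    · exact Set.subsingleton_empty
  | some ⟨S, hS⟩ =>
    show (if h : insert a S ≠ Finset.univ then ({some ⟨insert a S, h⟩} : Set (St k)) else ∅).Subsingleton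
    split
    · exact Set.subsingleton_singleton
    · exact Set.subsingleton_empty

lemma M2_evalFrom_some (k : ℕ) (t : List (Fin k)) (S : Finset (Fin k)) (h : S ≠ Finset.univ) :
    (M2 k).evalFrom {some ⟨S, h⟩} t =
      if h' : S ∪ t.toFinset ≠ Finset.univ then {some ⟨S ∪ t.toFinset, h'⟩} else ∅ := by
  induction t generalizing S with
  | nil => simp [h]
  | cons a t ih =>
    show (M2 k).evalFrom ((M2 k).stepSet {some ⟨S, h⟩} a) t = _
    have hstep : (M2 k).stepSet {some ⟨S, h⟩} a =
        if h' : insert a S ≠ Finset.univ then ({some ⟨insert a S, h'⟩} : Set (St k)) else ∅ := by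
      rw [myStepSet_singleton]; rfl
    rw [hstep]
    have hunion : S ∪ (a :: t).toFinset = insert a S ∪ t.toFinset := by
      rw [List.toFinset_cons, Finset.union_insert, Finset.insert_union]
    by_cases h' : insert a S ≠ Finset.univ
    · rw [dif_pos h', ih, hunion]
    · rw [dif_neg h', myEvalFrom_empty, dif_neg]
      push_neg at h' ⊢
      rw [hunion, h']
      simp

lemma empty_ne_univ (k : ℕ) (hk : 1 ≤ k) : (∅ : Finset (Fin k)) ≠ Finset.univ := by
  have : Nonempty (Fin k) := ⟨⟨0, hk⟩⟩
  simpa using (Finset.univ_nonempty (α := Fin k)).ne_empty.symm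

lemma downD_char (k : ℕ) (hk : 1 ≤ k) (D : Language (Fin k))
    (hD : D = {x | ∃ (a : Fin k) (w : List (Fin k)), x = a :: w ∧ a ∉ w}) :
    downClosure D = {x : List (Fin k) | x.tail.toFinset ≠ Finset.univ} := by
  have hempty : (∅ : Finset (Fin k)) ≠ Finset.univ := empty_ne_univ k hk
  ext x
  constructor
  · rintro ⟨y, hy, hsub⟩
    rw [hD] at hy
    obtain ⟨a, w, rfl, haw⟩ := hy
    cases x with
    | nil => exact hempty
    | cons c t =>
      have htw : t.Sublist w := by
        cases hsub with
        | cons _ h => exact (List.tail_sublist (c :: t)).trans h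
        | cons_cons _ h => exact h
      have hat : a ∉ t := fun hmem => haw (htw.subset hmem)
      show t.toFinset ≠ Finset.univ
      intro huniv
      exact hat (by rw [← List.mem_toFinset, huniv]; exact Finset.mem_univ a)
  · intro hx
    cases x with
    | nil =>
      refine ⟨[⟨0, hk⟩], ?_, List.nil_sublist _⟩
      rw [hD]; exact ⟨⟨0, hk⟩, [], rfl, by simp⟩
    | cons c t =>
      replace hx : t.toFinset ≠ Finset.univ := hx
      obtain ⟨b, hb⟩ : ∃ b : Fin k, b ∉ t := by
        by_contra hall
        push_neg at hall
        exact hx (Finset.eq_univ_iff_forall.2 fun b => List.mem_toFinset.2 (hall b))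
      by_cases hbc : b = c
      · refine ⟨c :: t, ?_, List.Sublist.refl _⟩
        rw [hD]; exact ⟨c, t, rfl, hbc ▸ hb⟩
      · refine ⟨b :: c :: t, ?_, List.sublist_cons_self _ _⟩
        rw [hD]
        exact ⟨b, c :: t, rfl, by simp [hbc, hb]⟩

lemma M2_accepts (k : ℕ) (hk : 1 ≤ k) (D : Language (Fin k))
    (hD : D = {x | ∃ (a : Fin k) (w : List (Fin k)), x = a :: w ∧ a ∉ w}) :
    (M2 k).accepts = downClosure D := by
  have hempty : (∅ : Finset (Fin k)) ≠ Finset.univ := empty_ne_univ k hk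
  rw [downD_char k hk D hD]
  ext x
  rw [NFA.mem_accepts]
  have hacc : ∀ q : St k, q ∈ (M2 k).accept := fun q => Set.mem_univ q
  cases x with
  | nil =>
    simp only [NFA.evalFrom_nil]
    constructor
    · intro _; exact hempty
    · intro _; exact ⟨none, hacc none, rfl⟩
  | cons a t =>
    have hstart : (M2 k).evalFrom (M2 k).start (a :: t) =
        (M2 k).evalFrom {some ⟨∅, hempty⟩} t := by
      show (M2 k).evalFrom ((M2 k).stepSet {none} a) t = _
      rw [myStepSet_singleton]
      show (M2 k).evalFrom
        (if h : (∅ : Finset (Fin k)) ≠ Finset.univ then ({some ⟨∅, h⟩} : Set (St k)) else ∅) t = _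
      rw [dif_pos hempty]
    rw [hstart, M2_evalFrom_some]
    simp only [Finset.empty_union, List.tail_cons, Set.mem_setOf_eq]
    by_cases ht : t.toFinset ≠ Finset.univ
    · rw [dif_pos ht]
      exact ⟨fun _ => ht, fun _ => ⟨_, hacc _, rfl⟩⟩
    · rw [dif_neg ht]
      constructor
      · rintro ⟨f, -, hf⟩; exact absurd hf (Set.notMem_empty f)
      · intro h; exact absurd h ht

end Auto
lemma card_St (k : ℕ) : Fintype.card (St k) = 2 ^ k := by
  classical
  have h1 : Fintype.card {S : Finset (Fin k) // S ≠ Finset.univ}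
      = Fintype.card (Finset (Fin k)) - Fintype.card {S : Finset (Fin k) // S = Finset.univ} :=
    Fintype.card_subtype_compl _
  rw [Fintype.card_option, h1, Fintype.card_subtype_eq, Fintype.card_finset, Fintype.card_fin]
  have : 1 ≤ 2 ^ k := Nat.one_le_two_pow
  omega
section Main

lemma consD_mem (k : ℕ) (D : Language (Fin k))
    (hD : D = {x | ∃ (a : Fin k) (w : List (Fin k)), x = a :: w ∧ a ∉ w})
    (c : Fin k) (t : List (Fin k)) : c :: t ∈ D ↔ c ∉ t := by
  rw [hD]
  constructor
  · rintro ⟨a, w, h, hn⟩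
    injection h with h1 h2
    subst h1; subst h2
    exact hn
  · intro h
    exact ⟨c, t, rfl, h⟩

/-- The sorted list of all letters, with its head/tail decomposition. -/
lemma usort_decomp (k : ℕ) (hk : 1 ≤ k) :
    ∃ c t, Finset.univ.sort (α := Fin k) (· ≤ ·) = c :: t ∧ c ∉ t := by
  rcases h : Finset.univ.sort (α := Fin k) (· ≤ ·) with - | ⟨c, t⟩
  · exfalso
    have := Finset.length_sort (α := Fin k) (· ≤ ·) (s := Finset.univ)
    rw [h] at this
    simp at this
    omega
  · have hnd := Finset.sort_nodup (α := Fin k) Finset.univ (· ≤ ·)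
    rw [h, List.nodup_cons] at hnd
    exact ⟨c, t, rfl, hnd.1⟩

/-- Fooling-set lower bound: any NFA for `D` has at least `k+1` states. -/
lemma D_lower (k : ℕ) (hk : 1 ≤ k) (D : Language (Fin k))
    (hD : D = {x | ∃ (a : Fin k) (w : List (Fin k)), x = a :: w ∧ a ∉ w})
    {σ : Type} [Fintype σ] (M : NFA (Fin k) σ) (hacc : M.accepts = D) :
    k + 1 ≤ Fintype.card σ := by
  classical
  set usort := Finset.univ.sort (α := Fin k) (· ≤ ·) with husort
  let x : Option (Fin k) → List (Fin k) := fun i => match i with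
    | none => []
    | some a => [a]
  let y : Option (Fin k) → List (Fin k) := fun i => match i with
    | none => usort
    | some a => (Finset.univ.erase a).sort (· ≤ ·)
  have hdiag : ∀ i, x i ++ y i ∈ M.accepts := by
    rw [hacc]
    intro i
    match i with
    | none =>
      obtain ⟨c, t, hct, hcnt⟩ := usort_decomp k hk
      show [] ++ usort ∈ D
      rw [List.nil_append, husort, hct, consD_mem k D hD]
      exact hcnt
    | some a =>
      show a :: (Finset.univ.erase a).sort (· ≤ ·) ∈ D
      rw [consD_mem k D hD, Finset.mem_sort]
      exact Finset.notMem_erase a Finset.univ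
  have hbad : ∀ a : Fin k, a :: usort ∉ D := by
    intro a h
    rw [consD_mem k D hD, husort, Finset.mem_sort] at h
    exact h (Finset.mem_univ a)
  have hcross : ∀ i j, i ≠ j → x i ++ y j ∉ M.accepts ∨ x j ++ y i ∉ M.accepts := by
    rw [hacc]
    intro i j hne
    match i, j with
    | none, none => exact absurd rfl hne
    | none, some a => exact Or.inr (hbad a)
    | some a, none => exact Or.inl (hbad a)
    | some a, some b =>
      left
      show a :: (Finset.univ.erase b).sort (· ≤ ·) ∉ D
      rw [consD_mem k D hD, Finset.mem_sort]
      intro h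
      apply h
      exact Finset.mem_erase_of_ne_of_mem (fun hab => hne (by rw [hab])) (Finset.mem_univ a)
  have := nfa_fooling M x y hdiag hcross
  simpa using this

lemma downD_lower (k : ℕ) (hk : 1 ≤ k) (D : Language (Fin k))
    (hD : D = {x | ∃ (a : Fin k) (w : List (Fin k)), x = a :: w ∧ a ∉ w})
    {σ : Type} [Fintype σ] (M : NFA (Fin k) σ) (hdet : M.Deterministic)
    (hacc : M.accepts = downClosure D) :
    2 ^ k ≤ Fintype.card σ := by
  classical
  have hchar : ∀ w : List (Fin k), w ∈ M.accepts ↔ w.tail.toFinset ≠ Finset.univ := by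
    intro w
    rw [hacc, downD_char k hk D hD]
    exact Iff.rfl
  set z : Fin k := ⟨0, hk⟩ with hz
  let u : St k → List (Fin k) := fun i => match i with
    | none => []
    | some ⟨S, _⟩ => z :: S.sort (· ≤ ·)
  have hmem : ∀ i, u i ∈ M.accepts := by
    intro i
    rw [hchar]
    match i with
    | none => exact empty_ne_univ k hk
    | some ⟨S, hS⟩ =>
      show (S.sort (· ≤ ·)).toFinset ≠ Finset.univ
      rw [Finset.sort_toFinset]
      exact hS
  -- key distinguishing extensions
  have key1 : ∀ (S : Finset (Fin k)) (hS : S ≠ Finset.univ), ∃ v,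
      ([] ++ v ∈ M.accepts) ∧ (u (some ⟨S, hS⟩) ++ v ∉ M.accepts) := by
    intro S hS
    refine ⟨Finset.univ.sort (· ≤ ·), ?_, ?_⟩
    · rw [hchar]
      obtain ⟨c, t, hct, hcnt⟩ := usort_decomp k hk
      rw [List.nil_append, hct]
      show t.toFinset ≠ Finset.univ
      intro huniv
      exact hcnt (by rw [← List.mem_toFinset, huniv]; exact Finset.mem_univ c)
    · rw [hchar]
      show ¬((S.sort (· ≤ ·) ++ Finset.univ.sort (· ≤ ·)).toFinset ≠ Finset.univ)
      push_neg
      rw [List.toFinset_append, Finset.sort_toFinset, Finset.sort_toFinset]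
      exact Finset.union_eq_right.2 (Finset.subset_univ _)
  have key2 : ∀ (S T : Finset (Fin k)) (hS : S ≠ Finset.univ) (hT : T ≠ Finset.univ)
      (b : Fin k), b ∈ T → b ∉ S → ∃ v,
      (u (some ⟨S, hS⟩) ++ v ∈ M.accepts) ∧ (u (some ⟨T, hT⟩) ++ v ∉ M.accepts) := by
    intro S T hS hT b hbT hbS
    refine ⟨(Finset.univ.erase b).sort (· ≤ ·), ?_, ?_⟩
    · rw [hchar]
      show ((S.sort (· ≤ ·) ++ (Finset.univ.erase b).sort (· ≤ ·)).toFinset ≠ Finset.univ)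
      rw [List.toFinset_append, Finset.sort_toFinset, Finset.sort_toFinset]
      intro huniv
      have : b ∈ S ∪ Finset.univ.erase b := by rw [huniv]; exact Finset.mem_univ b
      rcases Finset.mem_union.1 this with h | h
      · exact hbS h
      · exact Finset.notMem_erase b Finset.univ h
    · rw [hchar]
      push_neg
      show ((T.sort (· ≤ ·) ++ (Finset.univ.erase b).sort (· ≤ ·)).toFinset = Finset.univ)
      rw [List.toFinset_append, Finset.sort_toFinset, Finset.sort_toFinset]
      apply Finset.eq_univ_iff_forall.2
      intro c
      by_cases hcb : c = b
      · exact Finset.mem_union_left _ (hcb ▸ hbT)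
      · exact Finset.mem_union_right _ (Finset.mem_erase_of_ne_of_mem hcb (Finset.mem_univ c))
  have hdist : ∀ i j, i ≠ j → ∃ v, ¬(u i ++ v ∈ M.accepts ↔ u j ++ v ∈ M.accepts) := by
    intro i j hne
    match i, j with
    | none, none => exact absurd rfl hne
    | none, some ⟨S, hS⟩ =>
      obtain ⟨v, h1, h2⟩ := key1 S hS
      exact ⟨v, fun h => h2 (h.1 h1)⟩
    | some ⟨S, hS⟩, none =>
      obtain ⟨v, h1, h2⟩ := key1 S hS
      exact ⟨v, fun h => h2 (h.2 h1)⟩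
    | some ⟨S, hS⟩, some ⟨T, hT⟩ =>
      have hST : S ≠ T := by
        intro h
        apply hne
        subst h
        rfl
      obtain ⟨b, hb⟩ : ∃ b, (b ∈ T ∧ b ∉ S) ∨ (b ∈ S ∧ b ∉ T) := by
        by_contra hall
        push_neg at hall
        apply hST
        ext c
        exact ⟨fun hc => (hall c).2 hc, fun hc => (hall c).1 hc⟩
      rcases hb with ⟨hbT, hbS⟩ | ⟨hbS, hbT⟩
      · obtain ⟨v, h1, h2⟩ := key2 S T hS hT b hbT hbS
        exact ⟨v, fun h => h2 (h.1 h1)⟩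
      · obtain ⟨v, h1, h2⟩ := key2 T S hT hS b hbS hbT
        exact ⟨v, fun h => h2 (h.2 h1)⟩
  have hcard : Fintype.card (St k) = 2 ^ k := card_St k
  have := det_fooling M hdet u hmem hdist
  rwa [hcard] at this

end Main
/-- Tightness of the downward-closure bound: over `Σ_k = Fin k` (`k ≥ 1`), the
language `D_k` of nonempty words whose first letter does not reappear satisfies
`nN(D_k) = nD(D_k) = k + 1` and `nD(↓D_k) = 2^k`. -/
theorem downClosure_bound_tight (k : ℕ) (hk : 1 ≤ k) (D : Language (Fin k))
    (hD : D = {x | ∃ (a : Fin k) (w : List (Fin k)), x = a :: w ∧ a ∉ w}) :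
    nN D = k + 1 ∧ nD D = k + 1 ∧ nD (downClosure D) = 2 ^ k := by
  classical
  have memN : (k + 1) ∈ {n | ∃ (σ : Type) (inst : Fintype σ) (M : NFA (Fin k) σ),
      @Fintype.card σ inst = n ∧ M.accepts = D} :=
    ⟨Option (Fin k), inferInstance, M1 k, by simp, M1_accepts k D hD⟩
  have memDet : (k + 1) ∈ {n | ∃ (σ : Type) (inst : Fintype σ) (M : NFA (Fin k) σ),
      M.Deterministic ∧ @Fintype.card σ inst = n ∧ M.accepts = D} :=
    ⟨Option (Fin k), inferInstance, M1 k, M1_det k, by simp, M1_accepts k D hD⟩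
  have memDC : (2 ^ k) ∈ {n | ∃ (σ : Type) (inst : Fintype σ) (M : NFA (Fin k) σ),
      M.Deterministic ∧ @Fintype.card σ inst = n ∧ M.accepts = downClosure D} :=
    ⟨St k, inferInstance, M2 k, M2_det k, card_St k, M2_accepts k hk D hD⟩
  refine ⟨?_, ?_, ?_⟩
  · refine le_antisymm (Nat.sInf_le memN) (le_csInf ⟨_, memN⟩ ?_)
    rintro n ⟨σ, inst, M, hcard, hacc⟩
    subst hcard
    exact D_lower k hk D hD M hacc
  · refine le_antisymm (Nat.sInf_le memDet) (le_csInf ⟨_, memDet⟩ ?_)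
    rintro n ⟨σ, inst, M, -, hcard, hacc⟩
    subst hcard
    exact D_lower k hk D hD M hacc
  · refine le_antisymm (Nat.sInf_le memDC) (le_csInf ⟨_, memDC⟩ ?_)
    rintro n ⟨σ, inst, M, hdet, hcard, hacc⟩
    subst hcard
    exact downD_lower k hk D hD M hdet hacc
end
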